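/- For every p ≥ 1 there exists a constant c > 0 (depending only on p) such that for all 0 < s < 1/2: ∫₀¹∫₀¹ ( 2⁴ · x̂ · | (s−1)·ŷ·(x̂−ŷ) + (1−x̂)·(1−2ŷ) | )^p / ( s^{p−1} · (1 + x̂ + (s−1)·ŷ)^{p−1} ) dx̂ dŷ ≥ c · s^{1−p}. (This integral equals ‖∂φ_{11}/∂y‖_{0,p,K}^p for the basis function φ_{11} of the Q₂ element on K = K(1,s,s,2s), and the lower bound shows this quantity blows up as s → 0, yielding the counterexample to the W^{1,p} error estimate under the regular decomposition property alone.) -/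

import Mathlib

noncomputable section

open MeasureTheory Set

/-- The counterexample integral: for the `Q₂` element on `K(1,s,s,2s)` the quantity
`‖∂φ₁₁/∂y‖_{0,p,K}^p`, expressed as an integral over the unit square, is bounded below
by `c·s^{1−p}`, so it blows up as `s → 0` for `p > 1`. -/
theorem counterexample_integral_blowup (p : ℝ) (hp : 1 ≤ p) :
    ∃ c : ℝ, 0 < c ∧
      ∀ s : ℝ, 0 < s → s < 1 / 2 →
        c * s ^ (1 - p) ≤
          ∫ z in (Set.Icc (0:ℝ) 1) ×ˢ (Set.Icc (0:ℝ) 1),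
            ((2:ℝ) ^ (4:ℕ) * z.1 *
                |(s - 1) * z.2 * (z.1 - z.2) + (1 - z.1) * (1 - 2 * z.2)|) ^ p /
              (s ^ (p - 1) * (1 + z.1 + (s - 1) * z.2) ^ (p - 1)) := by
  refine ⟨(7/8 : ℝ) ^ p / ((2:ℝ) ^ (p - 1) * 64), by positivity, ?_⟩
  intro s hs hs2
  set f : ℝ × ℝ → ℝ := fun z =>
    ((2:ℝ) ^ (4:ℕ) * z.1 * |(s - 1) * z.2 * (z.1 - z.2) + (1 - z.1) * (1 - 2 * z.2)|) ^ p /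
      (s ^ (p - 1) * (1 + z.1 + (s - 1) * z.2) ^ (p - 1)) with hfdef
  set S : Set (ℝ × ℝ) := Icc (0:ℝ) 1 ×ˢ Icc (0:ℝ) 1 with hSdef
  set R : Set (ℝ × ℝ) := Icc (7/8:ℝ) 1 ×ˢ Icc (1/2:ℝ) (5/8) with hRdef
  have hspow : (0:ℝ) < s ^ (p - 1) := Real.rpow_pos_of_pos hs _
  have hp0 : (0:ℝ) ≤ p := by linarith
  have hp1 : (0:ℝ) ≤ p - 1 := by linarith
  -- positivity of the denominator base on S
  have hbase : ∀ z ∈ S, (0:ℝ) < 1 + z.1 + (s - 1) * z.2 := by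
    rintro ⟨x, y⟩ ⟨⟨hx0, hx1⟩, hy0, hy1⟩
    have : (0:ℝ) ≤ (1 - s) * (1 - y) := by nlinarith
    simp only at *
    nlinarith
  have hDpos : ∀ z ∈ S, (0:ℝ) < s ^ (p - 1) * (1 + z.1 + (s - 1) * z.2) ^ (p - 1) := by
    intro z hz
    exact mul_pos hspow (Real.rpow_pos_of_pos (hbase z hz) _)
  -- continuity / integrability on S
  have hcontN : Continuous fun z : ℝ × ℝ =>
      ((2:ℝ) ^ (4:ℕ) * z.1 * |(s - 1) * z.2 * (z.1 - z.2) + (1 - z.1) * (1 - 2 * z.2)|) ^ p := by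
    apply Continuous.rpow_const
    · fun_prop
    · intro z; exact Or.inr hp0
  have hcontD : Continuous fun z : ℝ × ℝ =>
      s ^ (p - 1) * (1 + z.1 + (s - 1) * z.2) ^ (p - 1) := by
    apply Continuous.mul continuous_const
    apply Continuous.rpow_const
    · fun_prop
    · intro z; exact Or.inr hp1
  have hcont : ContinuousOn f S := by
    apply ContinuousOn.div hcontN.continuousOn hcontD.continuousOn
    intro z hz; exact (hDpos z hz).ne'
  have hSmeas : MeasurableSet S := (measurableSet_Icc).prod measurableSet_Icc
  have hRmeas : MeasurableSet R := (measurableSet_Icc).prod measurableSet_Icc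
  have hSint : IntegrableOn f S := hcont.integrableOn_compact (isCompact_Icc.prod isCompact_Icc)
  -- nonnegativity on S
  have hfnn : ∀ z ∈ S, (0:ℝ) ≤ f z := by
    rintro ⟨x, y⟩ ⟨⟨hx0, hx1⟩, hy0, hy1⟩
    apply div_nonneg
    · apply Real.rpow_nonneg
      have := abs_nonneg ((s - 1) * y * (x - y) + (1 - x) * (1 - 2 * y))
      positivity
    · exact (hDpos ⟨x, y⟩ ⟨⟨hx0, hx1⟩, hy0, hy1⟩).le
  -- pointwise lower bound on R
  have hRS : R ⊆ S := by
    apply prod_mono <;> apply Icc_subset_Icc <;> norm_num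
  have hlb : ∀ z ∈ R, (7/8 : ℝ) ^ p / (s ^ (p - 1) * (2:ℝ) ^ (p - 1)) ≤ f z := by
    rintro ⟨x, y⟩ ⟨⟨hx0, hx1⟩, hy0, hy1⟩
    simp only at hx0 hx1 hy0 hy1
    have hzS : (⟨x, y⟩ : ℝ × ℝ) ∈ S := hRS ⟨⟨by norm_num; linarith, hx1⟩, ⟨by linarith, by linarith⟩⟩
    set A : ℝ := (s - 1) * y * (x - y) + (1 - x) * (1 - 2 * y) with hA
    have ha : (1/4:ℝ) ≤ (1 - s) * y := by nlinarith
    have hxy : (1/4:ℝ) ≤ x - y := by linarith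
    have hb : (1/16:ℝ) ≤ (1 - s) * y * (x - y) := by nlinarith
    have hc : (1 - x) * (1 - 2 * y) ≤ 0 := by nlinarith
    have hAle : A ≤ -(1/16) := by rw [hA]; nlinarith
    have habs : (1/16:ℝ) ≤ |A| := le_abs.mpr (Or.inr (by linarith))
    have hnum : (7/8:ℝ) ≤ (2:ℝ) ^ (4:ℕ) * x * |A| := by
      have h0 : (0:ℝ) ≤ |A| := abs_nonneg A
      nlinarith
    have hnum' : (7/8:ℝ) ^ p ≤ ((2:ℝ) ^ (4:ℕ) * x * |A|) ^ p :=
      Real.rpow_le_rpow (by norm_num) hnum hp0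
    have hden : s ^ (p - 1) * (1 + x + (s - 1) * y) ^ (p - 1) ≤ s ^ (p - 1) * (2:ℝ) ^ (p - 1) := by
      apply mul_le_mul_of_nonneg_left _ hspow.le
      apply Real.rpow_le_rpow (hbase _ hzS).le _ hp1
      nlinarith
    have hD := hDpos _ hzS
    exact div_le_div₀ (Real.rpow_nonneg (by positivity) p) hnum' hD hden
  -- volume of R
  have hvol : (volume R).toReal = 1/64 := by
    rw [hRdef, Measure.volume_eq_prod, Measure.prod_prod, Real.volume_Icc, Real.volume_Icc,
      ← ENNReal.ofReal_mul (by norm_num)]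
    rw [ENNReal.toReal_ofReal (by norm_num)]
    norm_num
  have hvolR : volume R ≠ ⊤ := by
    rw [hRdef, Measure.volume_eq_prod, Measure.prod_prod, Real.volume_Icc, Real.volume_Icc,
      ← ENNReal.ofReal_mul (by norm_num)]
    exact ENNReal.ofReal_ne_top
  -- integral over R
  have hRint : IntegrableOn f R := hSint.mono_set hRS
  have h1 : (7/8 : ℝ) ^ p / (s ^ (p - 1) * (2:ℝ) ^ (p - 1)) * (volume R).toReal
      ≤ ∫ z in R, f z :=
    setIntegral_ge_of_const_le_real hRmeas hvolR hlb hRint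
  have h2 : ∫ z in R, f z ≤ ∫ z in S, f z := by
    apply setIntegral_mono_set hSint
    · exact ae_restrict_of_forall_mem hSmeas hfnn
    · exact HasSubset.Subset.eventuallyLE hRS
  -- conclude
  have hkey : (7/8 : ℝ) ^ p / ((2:ℝ) ^ (p - 1) * 64) * s ^ (1 - p)
      = (7/8 : ℝ) ^ p / (s ^ (p - 1) * (2:ℝ) ^ (p - 1)) * (volume R).toReal := by
    rw [hvol]
    have : s ^ (1 - p) = (s ^ (p - 1))⁻¹ := by
      rw [show (1 - p) = -(p - 1) by ring, Real.rpow_neg hs.le]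
    rw [this]
    have h2pow : (0:ℝ) < (2:ℝ) ^ (p - 1) := Real.rpow_pos_of_pos (by norm_num) _
    field_simp
  rw [hkey]
  exact le_trans h1 h2
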